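/- Let ℓ be a prime, M a finite free Z_ℓ-module with a symmetric Z_ℓ-valued bilinear form, and Γ a group acting on M preserving the form. Let L ⊆ M be a Γ-submodule such that the restriction of the form to L has discriminant d ≠ 0. Then d·(M/L)^Γ is contained in the image of the natural map M^Γ → (M/L)^Γ. -/

import Mathlib

noncomputable def gramDet (R : Type) (S : Type) {M : Type} [CommRing R] [AddCommGroup M]
    [Module R M] [Module.Free R M] [Module.Finite R M] [CommRing S] (B : M → M → S) : S :=
  letI := Classical.decEq (Module.Free.ChooseBasisIndex R M)
  Matrix.det (Matrix.of fun i j => B (Module.Free.chooseBasis R M i) (Module.Free.chooseBasis R M j))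

/-- let `ℓ` be a prime, `M` a finite free `ℤ_ℓ`-module with a symmetric
`ℤ_ℓ`-valued bilinear form, and `Γ` a group acting on `M` preserving the form. If `L ⊆ M`
is a `Γ`-submodule on which the restricted form has discriminant `d ≠ 0`, then
`d·(M/L)^Γ` is contained in the image of the natural map `M^Γ → (M/L)^Γ`.
(An element of `(M/L)^Γ` is represented by `m : M` with `ρ γ m - m ∈ L` for all `γ`;
its `d`-multiple is in the image of `M^Γ` iff there is a `Γ`-fixed `m'` with `d•m - m' ∈ L`.) -/
theorem stmt2 (ℓ : ℕ) [Fact ℓ.Prime]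
    (M : Type) [AddCommGroup M] [Module ℤ_[ℓ] M] [Module.Free ℤ_[ℓ] M] [Module.Finite ℤ_[ℓ] M]
    (hrank : 0 < Module.finrank ℤ_[ℓ] M)
    (B : M →ₗ[ℤ_[ℓ]] M →ₗ[ℤ_[ℓ]] ℤ_[ℓ]) (hsymm : ∀ x y, B x y = B y x)
    (Γ : Type) [Group Γ] (ρ : Γ →* (M ≃ₗ[ℤ_[ℓ]] M))
    (hρ : ∀ (γ : Γ) (x y : M), B (ρ γ x) (ρ γ y) = B x y)
    (L : Submodule ℤ_[ℓ] M) (hL : ∀ γ : Γ, L.map (ρ γ).toLinearMap ≤ L)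
    (d : ℤ_[ℓ]) (hd : d = gramDet ℤ_[ℓ] ℤ_[ℓ] (fun x y : L => B x y)) (hd0 : d ≠ 0) :
    ∀ m : M, (∀ γ : Γ, ρ γ m - m ∈ L) →
      ∃ m' : M, (∀ γ : Γ, ρ γ m' = m') ∧ d • m - m' ∈ L := by
  intro m hm
  set ι := Module.Free.ChooseBasisIndex ℤ_[ℓ] L with hι
  letI : DecidableEq ι := Classical.decEq ι
  set b := Module.Free.chooseBasis ℤ_[ℓ] L with hb
  set G : Matrix ι ι ℤ_[ℓ] := Matrix.of (fun i j => B (b i) (b j)) with hG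
  have hdG : d = G.det := hd
  -- stability of L under all ρ γ
  have hLmem : ∀ (γ : Γ) {x : M}, x ∈ L → ρ γ x ∈ L := by
    intro γ x hx
    exact hL γ ⟨x, hx, rfl⟩
  have hcomp : ∀ (γ : Γ) (x : M), ρ γ (ρ γ⁻¹ x) = x := by
    intro γ x
    have : (ρ γ * ρ γ⁻¹) x = x := by
      rw [← map_mul, mul_inv_cancel, map_one]; rfl
    exact this
  -- the coefficient vectors
  set c : ι → ℤ_[ℓ] := fun i => B (b i) m with hc
  set a : ι → ℤ_[ℓ] := (Matrix.adjugate G).mulVec c with ha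
  have hGa : G.mulVec a = d • c := by
    rw [ha, Matrix.mulVec_mulVec, Matrix.mul_adjugate, ← hdG, Matrix.smul_mulVec,
      Matrix.one_mulVec]
  set l0 : M := ∑ j, a j • (b j : M) with hl0
  have hl0L : l0 ∈ L := by
    apply Submodule.sum_mem
    intro j _
    exact Submodule.smul_mem _ _ (b j).2
  have keyb : ∀ i : ι, B (b i) l0 = d * B (b i) m := by
    intro i
    have h1 : ∑ j, G i j * a j = d * c i := by
      have := congrFun hGa i
      simpa [Matrix.mulVec, dotProduct] using this
    calc B (b i) l0 = ∑ j, a j * B (b i) (b j) := by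
          rw [hl0, map_sum]; simp [smul_eq_mul]
      _ = ∑ j, G i j * a j := by
          apply Finset.sum_congr rfl; intro j _; rw [mul_comm]; rfl
      _ = d * B (b i) m := h1
  have key : ∀ x : L, B x l0 = d * B x m := by
    have hfg : (B.flip l0).comp L.subtype = d • ((B.flip m).comp L.subtype) := by
      apply b.ext
      intro i
      simpa [LinearMap.flip_apply, smul_eq_mul] using keyb i
    intro x
    have := LinearMap.congr_fun hfg x
    simpa [LinearMap.flip_apply, smul_eq_mul] using this
  -- nondegeneracy
  have hnd : ∀ z : M, z ∈ L → (∀ i : ι, B (b i) z = 0) → z = 0 := by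
    intro z hz h0
    set r : ι → ℤ_[ℓ] := fun j => b.repr ⟨z, hz⟩ j with hr
    have hzr : z = ∑ j, r j • (b j : M) := by
      have := b.sum_repr ⟨z, hz⟩
      have := congrArg (Submodule.subtype L) this
      simp only [map_sum, map_smul, Submodule.subtype_apply] at this
      exact this.symm
    have hGr : G.mulVec r = 0 := by
      funext i
      have : B (b i) z = ∑ j, G i j * r j := by
        rw [hzr, map_sum]
        apply Finset.sum_congr rfl
        intro j _
        rw [map_smul, smul_eq_mul, mul_comm]
        rfl
      have h2 := h0 i
      rw [this] at h2
      simpa [Matrix.mulVec, dotProduct] using h2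
    have hr0 : ∀ j, r j = 0 := by
      have h3 : (Matrix.adjugate G).mulVec (G.mulVec r) = 0 := by
        rw [hGr, Matrix.mulVec_zero]
      rw [Matrix.mulVec_mulVec, Matrix.adjugate_mul, ← hdG] at h3
      intro j
      have := congrFun h3 j
      rw [Matrix.smul_mulVec, Matrix.one_mulVec] at this
      have : d * r j = 0 := this
      rcases mul_eq_zero.1 this with h | h
      · exact absurd h hd0
      · exact h
    rw [hzr]
    simp [hr0]
  -- the cocycle identity
  have hcocycle : ∀ γ : Γ, ρ γ l0 - l0 = d • (ρ γ m - m) := by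
    intro γ
    have hmemz : ρ γ l0 - l0 - d • (ρ γ m - m) ∈ L := by
      refine Submodule.sub_mem _ (Submodule.sub_mem _ (hLmem γ hl0L) hl0L)
        (Submodule.smul_mem _ _ (hm γ))
    have h0 : ∀ i : ι, B (b i) (ρ γ l0 - l0 - d • (ρ γ m - m)) = 0 := by
      intro i
      have hinv : ρ γ⁻¹ (b i : M) ∈ L := hLmem γ⁻¹ (b i).2
      have e1 : B (b i) (ρ γ l0) = B (ρ γ⁻¹ (b i)) l0 := by
        conv_lhs => rw [← hcomp γ (b i : M)]
        rw [hsymm, hρ, hsymm]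
      have e2 : B (ρ γ⁻¹ (b i)) l0 = d * B (ρ γ⁻¹ (b i)) m := key ⟨_, hinv⟩
      have e3 : B (ρ γ⁻¹ (b i)) m = B (b i) (ρ γ m) := by
        conv_rhs => rw [← hcomp γ (b i : M)]
        rw [hρ]
      have e4 : B (b i) l0 = d * B (b i) m := keyb i
      simp only [map_sub, map_smul, smul_eq_mul]
      rw [e1, e2, e3, e4]
      ring
    have := hnd _ hmemz h0
    have h5 : ρ γ l0 - l0 - d • (ρ γ m - m) = 0 := this
    linear_combination (norm := abel) h5
  refine ⟨d • m - l0, ?_, ?_⟩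
  · intro γ
    have := hcocycle γ
    have h6 : ρ γ (d • m - l0) = d • ρ γ m - ρ γ l0 := by
      rw [map_sub, map_smul]
    rw [h6]
    have h7 : ρ γ l0 = l0 + d • (ρ γ m - m) := by
      linear_combination (norm := abel) this
    rw [h7, smul_sub]
    abel
  · simpa using hl0L
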